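/- Let B be a finite band, k a commutative ring, and suppose the graphs Γ_R(B,X) are all connected. Then the kernel J of the induced support map σ: kB → kΛ(B) satisfies kB·J = J, i.e., J is spanned by differences x − x' with σ(x) = σ(x') for which there exists y ∈ B with yx = x and yx' = x'. -/

import Mathlib

/-- The principal two-sided ideal `BbB = {u*b*v}` in a semigroup. -/
def prinIdeal {B : Type*} [Semigroup B] (b : B) : Set B := {z | ∃ u v : B, z = u * b * v}

/-- The `k`-linear map `kB → kΛ(B)` induced by the support map `σ : b ↦ BbB` of a band. -/
noncomputable def suppAlgMap {B : Type*} [Semigroup B] (k : Type*) [CommRing k] :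
    MonoidAlgebra k B →ₗ[k] MonoidAlgebra k (Set B) :=
  MonoidAlgebra.mapDomainLinearMap k k (prinIdeal (B := B))

section BandAux

variable {B : Type*} [Semigroup B] (hband : ∀ x : B, x * x = x)

include hband in
theorem band_sandwich (a w b : B) : (a*w*b) * (a*b) * (a*w*b) = a*w*b := by
  have h1 : (a*w*b) * (a*b) * (a*w*b) = a*(w*((b*a)*(b*a)*(w*b))) := by
    simp only [mul_assoc]
  rw [h1, hband (b*a)]
  have h2 : a*(w*((b*a)*(w*b))) = (a*w*b)*(a*w*b) := by simp only [mul_assoc]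
  rw [h2, hband]

include hband in
theorem band_inter (a b : B) : prinIdeal (a * b) = prinIdeal a ∩ prinIdeal b := by
  ext z
  constructor
  · rintro ⟨u, v, rfl⟩
    exact ⟨⟨u, b*v, by simp only [mul_assoc]⟩, ⟨u*a, v, by simp only [mul_assoc]⟩⟩
  · rintro ⟨⟨s, t, hz1⟩, ⟨p, q, hz2⟩⟩
    refine ⟨s*(a*(t*p)*b), (a*(t*p)*b)*q, ?_⟩
    have h1 : z = s*(a*(t*p)*b)*q := by
      calc z = z * z := (hband z).symm
        _ = (s*a*t)*(p*b*q) := by rw [← hz1, ← hz2]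
        _ = s*(a*(t*p)*b)*q := by simp only [mul_assoc]
    calc z = s*(a*(t*p)*b)*q := h1
      _ = s*((a*(t*p)*b)*(a*b)*(a*(t*p)*b))*q := by rw [band_sandwich hband]
      _ = (s*(a*(t*p)*b))*(a*b)*((a*(t*p)*b)*q) := by simp only [mul_assoc]

include hband in
theorem band_cong {x x' : B} (h : prinIdeal x = prinIdeal x') (b : B) :
    prinIdeal (b * x) = prinIdeal (b * x') := by
  rw [band_inter hband, band_inter hband, h]

end BandAux

section AlgAux

variable {B : Type*} [Semigroup B] {k : Type*} [CommRing k]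

theorem suppAlgMap_apply (f : MonoidAlgebra k B) :
    suppAlgMap k f = MonoidAlgebra.mapDomain prinIdeal f := rfl

theorem suppAlgMap_single (x : B) (c : k) :
    suppAlgMap k (MonoidAlgebra.single x c) = MonoidAlgebra.single (prinIdeal x) c := by
  rw [suppAlgMap_apply,
    MonoidAlgebra.mapDomain_single]

theorem suppAlgMap_mul_single (a : MonoidAlgebra k B) (x : B) :
    suppAlgMap k (a * MonoidAlgebra.single x 1) =
      MonoidAlgebra.mapDomain (fun b => prinIdeal (b * x)) a := by
  induction a using MonoidAlgebra.induction_linear with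
  | zero => simp only [zero_mul, map_zero, MonoidAlgebra.mapDomain_zero]
  | add f g hf hg =>
      rw [add_mul, map_add, hf, hg, MonoidAlgebra.mapDomain_add]
  | single b c =>
      rw [MonoidAlgebra.single_mul_single, mul_one, suppAlgMap_single,
        MonoidAlgebra.mapDomain_single]

end AlgAux

theorem band_GammaR_connected_kernel_span {B : Type*} [Semigroup B] [Fintype B]
    (hband : ∀ x : B, x * x = x) (k : Type*) [CommRing k]
    (hconn : ∀ x x' : B, prinIdeal x = prinIdeal x' →
      Relation.ReflTransGen
        (fun u v => prinIdeal u = prinIdeal v ∧ ∃ y : B, y * u = u ∧ y * v = v) x x') :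
    LinearMap.ker (suppAlgMap (B := B) k) =
      Submodule.span k {f : MonoidAlgebra k B | ∃ x x' y : B,
        prinIdeal x = prinIdeal x' ∧ y * x = x ∧ y * x' = x' ∧
        f = MonoidAlgebra.single x 1 - MonoidAlgebra.single x' 1} ∧
    ∀ f : MonoidAlgebra k B, suppAlgMap k f = 0 ↔
      f ∈ AddSubgroup.closure {z : MonoidAlgebra k B |
        ∃ (a j : MonoidAlgebra k B), suppAlgMap k j = 0 ∧ z = a * j} := by
  classical
  set S : Set (MonoidAlgebra k B) := {f : MonoidAlgebra k B | ∃ x x' y : B,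
      prinIdeal x = prinIdeal x' ∧ y * x = x ∧ y * x' = x' ∧
      f = MonoidAlgebra.single x 1 - MonoidAlgebra.single x' 1} with hS
  set N : Submodule k (MonoidAlgebra k B) := Submodule.span k S with hN
  -- every element of S is in the kernel
  have hSker : ∀ g ∈ S, suppAlgMap k g = 0 := by
    rintro g ⟨x, x', y, hxx', hy1, hy2, rfl⟩
    rw [map_sub, suppAlgMap_single, suppAlgMap_single, hxx', sub_self]
  -- chain lemma
  have hchain : ∀ x x' : B, prinIdeal x = prinIdeal x' →
      (MonoidAlgebra.single x 1 - MonoidAlgebra.single x' 1 : MonoidAlgebra k B) ∈ N := by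
    intro x x' h
    have hc := hconn x x' h
    induction hc with
    | refl => rw [sub_self]; exact zero_mem N
    | @tail b c _ hbc ih =>
        obtain ⟨hPbc, y, hy1, hy2⟩ := hbc
        have hbcN : (MonoidAlgebra.single b 1 - MonoidAlgebra.single c 1 : MonoidAlgebra k B) ∈ N :=
          Submodule.subset_span ⟨b, c, y, hPbc, hy1, hy2, rfl⟩
        have heq : (MonoidAlgebra.single x 1 - MonoidAlgebra.single c 1 : MonoidAlgebra k B)
            = (MonoidAlgebra.single x 1 - MonoidAlgebra.single b 1)
              + (MonoidAlgebra.single b 1 - MonoidAlgebra.single c 1) := by abel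
        rw [heq]
        exact add_mem (ih (h.trans hPbc.symm)) hbcN
  -- a section of the fibers of prinIdeal
  let sd : Setoid B := ⟨fun a b => prinIdeal a = prinIdeal b,
    ⟨fun _ => rfl, Eq.symm, Eq.trans⟩⟩
  let r : B → B := fun b => (Quotient.mk sd b).out
  have hr1 : ∀ b : B, prinIdeal (r b) = prinIdeal b := by
    intro b
    exact Quotient.exact (Quotient.out_eq (Quotient.mk sd b))
  have hr2 : ∀ a b : B, prinIdeal a = prinIdeal b → r a = r b := by
    intro a b h
    show (Quotient.mk sd a).out = (Quotient.mk sd b).out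
    rw [Quotient.sound (s := sd) h]
  -- kernel elements lie in N
  have hker_le : ∀ f : MonoidAlgebra k B, suppAlgMap k f = 0 → f ∈ N := by
    intro f hf
    let ρ : MonoidAlgebra k B →ₗ[k] MonoidAlgebra k B := MonoidAlgebra.mapDomainLinearMap k k r
    have hρ : ∀ g : MonoidAlgebra k B, ρ g = MonoidAlgebra.mapDomain r g := fun _ => rfl
    have hinjP : Set.InjOn prinIdeal (Set.range r) := by
      rintro _ ⟨a, rfl⟩ _ ⟨b, rfl⟩ hab
      exact hr2 a b (by rw [← hr1 a, ← hr1 b]; exact hab)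
    have hzero : ρ f = 0 := by
      have hcomp : Finsupp.mapDomain prinIdeal (Finsupp.mapDomain r f.coeff)
          = (0 : Set B →₀ k) := by
        rw [← Finsupp.mapDomain_comp]
        have hPr : prinIdeal ∘ r = (prinIdeal : B → Set B) := funext fun b => hr1 b
        rw [hPr]
        exact congrArg MonoidAlgebra.coeff hf
      apply MonoidAlgebra.coeff_injective
      refine Finsupp.mapDomain_injOn (Set.range r) hinjP ?_ ?_ ?_
      · show ↑(Finsupp.mapDomain r f.coeff).support ⊆ Set.range r
        refine subset_trans (Finset.coe_subset.mpr Finsupp.mapDomain_support) ?_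
        rw [Finset.coe_image]
        exact Set.image_subset_range r _
      · show ↑(0 : B →₀ k).support ⊆ Set.range r
        simp
      · show Finsupp.mapDomain prinIdeal (Finsupp.mapDomain r f.coeff)
          = Finsupp.mapDomain prinIdeal (0 : B →₀ k)
        rw [hcomp, Finsupp.mapDomain_zero]
    have hdiff : ∀ g : MonoidAlgebra k B, g - ρ g ∈ N := by
      intro g
      induction g using MonoidAlgebra.induction_linear with
      | zero => rw [map_zero, sub_zero]; exact zero_mem N
      | add p q hp hq =>
          rw [map_add, add_sub_add_comm]
          exact add_mem hp hq
      | single b c =>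
          rw [hρ, MonoidAlgebra.mapDomain_single]
          have heq : (MonoidAlgebra.single b c : MonoidAlgebra k B) - MonoidAlgebra.single (r b) c
              = c • (MonoidAlgebra.single b 1 - MonoidAlgebra.single (r b) 1) := by
            rw [smul_sub]
            rw [MonoidAlgebra.smul_single' c b 1, MonoidAlgebra.smul_single' c (r b) 1, mul_one]
          rw [heq]
          exact Submodule.smul_mem N c (hchain b (r b) (hr1 b).symm)
    have := hdiff f
    rwa [hzero, sub_zero] at this
  have part1 : LinearMap.ker (suppAlgMap (B := B) k) = N := by
    apply le_antisymm
    · intro f hf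
      exact hker_le f (LinearMap.mem_ker.mp hf)
    · rw [hN]
      refine Submodule.span_le.mpr ?_
      intro g hg
      exact LinearMap.mem_ker.mpr (hSker g hg)
  refine ⟨part1, ?_⟩
  -- part 2
  set T : Set (MonoidAlgebra k B) := {z : MonoidAlgebra k B |
      ∃ (a j : MonoidAlgebra k B), suppAlgMap k j = 0 ∧ z = a * j} with hT
  intro f
  constructor
  · -- forward: kernel element is in the closure
    intro hf
    have hCsmul : ∀ (c : k) (z : MonoidAlgebra k B),
        z ∈ AddSubgroup.closure T → c • z ∈ AddSubgroup.closure T := by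
      intro c z hz
      induction hz using AddSubgroup.closure_induction with
      | mem w hw =>
          obtain ⟨a, j, hj, rfl⟩ := hw
          rw [← smul_mul_assoc]
          exact AddSubgroup.subset_closure ⟨c • a, j, hj, rfl⟩
      | zero => rw [smul_zero]; exact AddSubgroup.zero_mem _
      | add p q hp hq hp' hq' => rw [smul_add]; exact AddSubgroup.add_mem _ hp' hq'
      | neg p hp hp' => rw [smul_neg]; exact AddSubgroup.neg_mem _ hp'
    let M : Submodule k (MonoidAlgebra k B) :=
      { carrier := AddSubgroup.closure T
        add_mem' := fun h1 h2 => AddSubgroup.add_mem _ h1 h2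
        zero_mem' := AddSubgroup.zero_mem _
        smul_mem' := fun c z hz => hCsmul c z hz }
    have hSM : S ⊆ M := by
      rintro g ⟨x, x', y, hxx', hy1, hy2, rfl⟩
      have hg0 : suppAlgMap k
          (MonoidAlgebra.single x 1 - MonoidAlgebra.single x' (1:k)) = 0 :=
        hSker _ ⟨x, x', y, hxx', hy1, hy2, rfl⟩
      have hgy : (MonoidAlgebra.single y 1 : MonoidAlgebra k B)
          * (MonoidAlgebra.single x 1 - MonoidAlgebra.single x' 1)
          = MonoidAlgebra.single x 1 - MonoidAlgebra.single x' 1 := by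
        rw [mul_sub, MonoidAlgebra.single_mul_single, MonoidAlgebra.single_mul_single,
          one_mul, hy1, hy2]
      show _ ∈ AddSubgroup.closure T
      exact AddSubgroup.subset_closure
        ⟨MonoidAlgebra.single y 1, _, hg0, hgy.symm⟩
    have hfN : f ∈ N := hker_le f hf
    have : N ≤ M := by rw [hN]; exact Submodule.span_le.mpr hSM
    exact this hfN
  · -- backward: closure elements are in the kernel
    intro hf
    have hmulker : ∀ (a j : MonoidAlgebra k B), suppAlgMap k j = 0 →
        suppAlgMap k (a * j) = 0 := by
      intro a j hj
      have hjN : j ∈ N := hker_le j hj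
      rw [hN] at hjN
      clear hj
      induction hjN using Submodule.span_induction with
      | mem g hg =>
          obtain ⟨x, x', y, hxx', hy1, hy2, rfl⟩ := hg
          rw [mul_sub, map_sub, suppAlgMap_mul_single, suppAlgMap_mul_single]
          have : (fun b => prinIdeal (b * x)) = (fun b => prinIdeal (b * x')) :=
            funext fun b => band_cong hband hxx' b
          rw [this, sub_self]
      | zero => rw [mul_zero, map_zero]
      | add p q _ _ hp hq => rw [mul_add, map_add, hp, hq, add_zero]
      | smul c p _ hp => rw [mul_smul_comm, map_smul, hp, smul_zero]
    induction hf using AddSubgroup.closure_induction with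
    | mem w hw =>
        obtain ⟨a, j, hj, rfl⟩ := hw
        exact hmulker a j hj
    | zero => exact map_zero _
    | add p q hp hq hp' hq' => rw [map_add, hp', hq', add_zero]
    | neg p hp hp' => rw [map_neg, hp', neg_zero]
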